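/- arXiv:1305.3266 — 2 statements merged into one kernel-verified Lean document; each statement's English description precedes it below -/
import Mathlib

section
/- Maximum principle for problems with advanced argument: Let τ : [a,b] → [a,b+r] be measurable with τ(t) ≥ t for a.e. t ∈ [a,b], and let p : [a,b+r] → ℝ be continuous, with p restricted to [a,b] absolutely continuous, satisfying p'(t) ≥ K(t)p(t) − L(t)p(τ(t)) for a.e. t ∈ [a,b] and p(t) = 0 for all t ∈ [b,b+r], where K, L ∈ L¹([a,b]) and L ≥ 0 a.e. If ∫_a^b (K₋(t) + L(t)) dt < 1, where K₋ = max{−K, 0}, then p(t) ≤ 0 for all t ∈ [a,b+r]. -/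
open MeasureTheory

/-- Maximum principle for problems with advanced argument. Absolute continuity of `p` on
`[a,b]` is expressed by the fundamental-theorem-of-calculus representation
`p t = p a + ∫_a^t p'`. -/
theorem stmt_8 (a b r : ℝ) (hab : a ≤ b) (hr : 0 ≤ r)
    (τ : ℝ → ℝ) (hτmeas : Measurable τ)
    (hτrange : ∀ t ∈ Set.Icc a b, τ t ∈ Set.Icc a (b + r))
    (hτadv : ∀ᵐ t ∂(volume.restrict (Set.Icc a b)), t ≤ τ t)
    (p p' K L : ℝ → ℝ)
    (hpcont : ContinuousOn p (Set.Icc a (b + r)))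
    (hp'int : IntegrableOn p' (Set.Icc a b))
    (hpAC : ∀ t ∈ Set.Icc a b, p t = p a + ∫ s in a..t, p' s)
    (hKint : IntegrableOn K (Set.Icc a b))
    (hLint : IntegrableOn L (Set.Icc a b))
    (hLpos : ∀ᵐ t ∂(volume.restrict (Set.Icc a b)), 0 ≤ L t)
    (hineq : ∀ᵐ t ∂(volume.restrict (Set.Icc a b)),
      p' t ≥ K t * p t - L t * p (τ t))
    (hfinal : ∀ t ∈ Set.Icc b (b + r), p t = 0)
    (hint : (∫ t in a..b, (max (-K t) 0 + L t)) < 1) :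
    ∀ t ∈ Set.Icc a (b + r), p t ≤ 0 := by
  intro t ht
  by_contra hpt
  push_neg at hpt
  have hbr : b ≤ b + r := by linarith
  have habr : a ≤ b + r := le_trans hab hbr
  have hne : (Set.Icc a (b + r)).Nonempty := ⟨t, ht⟩
  obtain ⟨t₀, ht₀mem, ht₀max⟩ := isCompact_Icc.exists_isMaxOn hne hpcont
  set M := p t₀ with hM
  have hMpos : 0 < M := lt_of_lt_of_le hpt (ht₀max ht)
  have ht₀b : t₀ ≤ b := by
    by_contra h
    push_neg at h
    have : p t₀ = 0 := hfinal t₀ ⟨le_of_lt h, ht₀mem.2⟩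
    linarith
  -- the set of zeros of p to the right of t₀
  set S := Set.Icc t₀ b ∩ p ⁻¹' {0} with hS
  have hpb : p b = 0 := hfinal b ⟨le_rfl, hbr⟩
  have hbS : b ∈ S := ⟨⟨ht₀b, le_rfl⟩, hpb⟩
  have hSne : S.Nonempty := ⟨b, hbS⟩
  have hSbdd : BddBelow S := ⟨t₀, fun s hs => hs.1.1⟩
  have hsub : Set.Icc t₀ b ⊆ Set.Icc a (b + r) := Set.Icc_subset_Icc ht₀mem.1 hbr
  have hScl : IsClosed S :=
    (hpcont.mono hsub).preimage_isClosed_of_isClosed isClosed_Icc isClosed_singleton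
  set t₁ := sInf S with ht₁
  have ht₁S : t₁ ∈ S := hScl.csInf_mem hSne hSbdd
  have ht₀t₁ : t₀ ≤ t₁ := ht₁S.1.1
  have ht₁b : t₁ ≤ b := ht₁S.1.2
  have hpt₁ : p t₁ = 0 := ht₁S.2
  have hsub2 : Set.Icc t₀ t₁ ⊆ Set.Icc a b := Set.Icc_subset_Icc ht₀mem.1 ht₁b
  -- p is nonnegative on [t₀, t₁]
  have hpos : ∀ s ∈ Set.Icc t₀ t₁, 0 ≤ p s := by
    intro s hs
    by_contra hneg
    push_neg at hneg
    have hsb : s ≤ b := le_trans hs.2 ht₁b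
    have h0 : (0 : ℝ) ∈ Set.Icc (p s) (p t₀) := ⟨le_of_lt hneg, le_of_lt hMpos⟩
    obtain ⟨u, hu, hpu⟩ := intermediate_value_Icc' hs.1
      (hpcont.mono (Set.Icc_subset_Icc ht₀mem.1 (le_trans hsb hbr))) h0
    have huS : u ∈ S := ⟨⟨hu.1, le_trans hu.2 hsb⟩, hpu⟩
    have ht₁u : t₁ ≤ u := csInf_le hSbdd huS
    have hus : u = s := le_antisymm hu.2 (le_trans hs.2 ht₁u)
    rw [hus] at hpu
    linarith
  -- fundamental theorem of calculus pieces
  have hIp' : ∀ c ∈ Set.Icc a b, IntervalIntegrable p' volume a c := by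
    intro c hc
    rw [intervalIntegrable_iff_integrableOn_Icc_of_le hc.1]
    exact hp'int.mono_set (Set.Icc_subset_Icc le_rfl hc.2)
  have ht₀ab : t₀ ∈ Set.Icc a b := ⟨ht₀mem.1, ht₀b⟩
  have ht₁ab : t₁ ∈ Set.Icc a b := ⟨le_trans ht₀mem.1 ht₀t₁, ht₁b⟩
  have hkey : M = ∫ s in t₀..t₁, -p' s := by
    have h1 : p t₁ - p t₀ = ∫ s in t₀..t₁, p' s := by
      rw [hpAC t₁ ht₁ab, hpAC t₀ ht₀ab]
      have := intervalIntegral.integral_interval_sub_left (hIp' t₁ ht₁ab) (hIp' t₀ ht₀ab)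
      linarith [this]
    rw [intervalIntegral.integral_neg]
    rw [hpt₁] at h1
    linarith
  -- interval integrability of the dominating function
  set F := fun s : ℝ => max (-K s) 0 + L s with hF
  have hFint : IntegrableOn F (Set.Icc a b) := hKint.neg.pos_part.add hLint
  have hFI : IntervalIntegrable F volume a b := by
    rw [intervalIntegrable_iff_integrableOn_Icc_of_le hab]; exact hFint
  have hFI' : IntervalIntegrable (fun s => F s * M) volume t₀ t₁ := by
    rw [intervalIntegrable_iff_integrableOn_Icc_of_le ht₀t₁]
    exact (hFint.mono_set hsub2).mul_const M
  have hp'I : IntervalIntegrable (fun s => -p' s) volume t₀ t₁ := by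
    rw [intervalIntegrable_iff_integrableOn_Icc_of_le ht₀t₁]
    exact (hp'int.mono_set hsub2).neg
  -- the main a.e. inequality on [t₀, t₁]
  have hae : (fun s => -p' s) ≤ᵐ[volume.restrict (Set.Icc t₀ t₁)] fun s => F s * M := by
    have hineq' := ae_restrict_of_ae_restrict_of_subset hsub2 hineq
    have hLpos' := ae_restrict_of_ae_restrict_of_subset hsub2 hLpos
    filter_upwards [hineq', hLpos', ae_restrict_mem measurableSet_Icc] with s h₁ h₂ hs
    have hps : 0 ≤ p s := hpos s hs
    have hpsM : p s ≤ M := ht₀max (hsub ⟨hs.1, le_trans hs.2 ht₁b⟩)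
    have hpτ : p (τ s) ≤ M := ht₀max (hτrange s (hsub2 hs))
    have hK1 : -K s ≤ max (-K s) 0 := le_max_left _ _
    have hK0 : (0 : ℝ) ≤ max (-K s) 0 := le_max_right _ _
    simp only [hF]
    nlinarith [mul_le_mul_of_nonneg_right hK1 hps, mul_le_mul_of_nonneg_left hpsM hK0,
      mul_le_mul_of_nonneg_left hpτ h₂]
  have hmono : (∫ s in t₀..t₁, -p' s) ≤ ∫ s in t₀..t₁, F s * M :=
    intervalIntegral.integral_mono_ae_restrict ht₀t₁ hp'I hFI' hae
  have hFnn : 0 ≤ᵐ[volume.restrict (Set.Ioc a b)] F := by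
    filter_upwards [ae_restrict_of_ae_restrict_of_subset Set.Ioc_subset_Icc_self hLpos] with s hs
    simp only [hF, Pi.zero_apply]
    have : (0 : ℝ) ≤ max (-K s) 0 := le_max_right _ _
    linarith
  have hmono2 : (∫ s in t₀..t₁, F s) ≤ ∫ s in a..b, F s :=
    intervalIntegral.integral_mono_interval ht₀mem.1 ht₀t₁ ht₁b hFnn hFI
  have hmul : (∫ s in t₀..t₁, F s * M) = (∫ s in t₀..t₁, F s) * M :=
    intervalIntegral.integral_mul_const M F
  have hfin : M ≤ (∫ s in a..b, F s) * M := by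
    calc M = ∫ s in t₀..t₁, -p' s := hkey
    _ ≤ ∫ s in t₀..t₁, F s * M := hmono
    _ = (∫ s in t₀..t₁, F s) * M := hmul
    _ ≤ (∫ s in a..b, F s) * M := by
        apply mul_le_mul_of_nonneg_right hmono2 (le_of_lt hMpos)
  have hlt : (∫ s in a..b, F s) * M < M := by
    have : (∫ s in a..b, F s) < 1 := hint
    nlinarith
  linarith
end

section
/- Coupled fixed point theorem for multivalued operators: Let Y be a subset of an ordered metric space X, [α,β] a nonempty closed order interval in Y, and 𝒜 : [α,β] × [α,β] → 2^{[α,β]} \ {∅} a multivalued operator. Suppose that for all v, w ∈ [α,β] the minimum A₊(v,w) = min 𝒜(v,w) and maximum A*(v,w) = max 𝒜(v,w) exist in [α,β], and that the single-valued operators A₊ and A* are mixed monotone and satisfy the mixed monotone convergence property. Then 𝒜 has extremal coupled fixed points v₊, w* in [α,β], characterized by (v₊, w*) = min_⪯ {(v,w) : A₊(v,w) ≤ v and A*(w,v) ≥ w}, where (v,w) ⪯ (v̄,w̄) iff v ≤ v̄ and w ≥ w̄. -/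
open Filter Topology

section Aux

variable {X : Type*} [PartialOrder X]

/-- The mixed order on pairs. -/
def Rr (p q : X × X) : Prop := p.1 ≤ q.1 ∧ q.2 ≤ p.2

/-- The coupled quasi-fixed-point set. -/
def Dse (S : Set X) (Amin Amax : X → X → X) : Set (X × X) :=
  {p | p.1 ∈ S ∧ p.2 ∈ S ∧ Amin p.1 p.2 ≤ p.1 ∧ p.2 ≤ Amax p.2 p.1}

/-- The set of "lower approximations": pairs below `Dse` that expand under the operator. -/
def Ese (S : Set X) (Amin Amax : X → X → X) : Set (X × X) :=
  {p | p.1 ∈ S ∧ p.2 ∈ S ∧ p.1 ≤ Amin p.1 p.2 ∧ Amax p.2 p.1 ≤ p.2 ∧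
    ∀ q ∈ Dse S Amin Amax, p.1 ≤ q.1 ∧ q.2 ≤ p.2}

theorem Rr_refl (p : X × X) : Rr p p := ⟨le_refl _, le_refl _⟩

theorem Rr_trans {p q r : X × X} (h1 : Rr p q) (h2 : Rr q r) : Rr p r :=
  ⟨le_trans h1.1 h2.1, le_trans h2.2 h1.2⟩

end Aux

/-- Coupled fixed point theorem for multivalued operators on an ordered metric space
(a metric space with a partial order whose order intervals `[x)` and `(x]` are closed).
`S` is the closed order interval `[α,β]` inside `Y`; `Amin v w` and `Amax v w` are the
minimum and maximum of `Aop v w`; both are mixed monotone and satisfy the mixed monotone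
convergence property. Then `Aop` has extremal coupled fixed points `vmin, wmax` in `S`,
characterized as the `⪯`-minimum of `{(v,w) : Amin v w ≤ v, w ≤ Amax w v}` where
`(v,w) ⪯ (v',w') ↔ v ≤ v' ∧ w' ≤ w`. -/
theorem stmt_10 {X : Type*} [MetricSpace X] [PartialOrder X]
    (hclosed : ∀ x : X, IsClosed (Set.Ici x) ∧ IsClosed (Set.Iic x))
    (Y : Set X) (α β : X) (hαβY : α ∈ Y ∧ β ∈ Y)
    (S : Set X) (hS : S = {y ∈ Y | α ≤ y ∧ y ≤ β})
    (hSne : S.Nonempty) (hSclosed : IsClosed S)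
    (Aop : X → X → Set X)
    (hAop : ∀ v ∈ S, ∀ w ∈ S, (Aop v w).Nonempty ∧ Aop v w ⊆ S)
    (Amin Amax : X → X → X)
    (hmin : ∀ v ∈ S, ∀ w ∈ S, Amin v w ∈ Aop v w ∧ ∀ z ∈ Aop v w, Amin v w ≤ z)
    (hmax : ∀ v ∈ S, ∀ w ∈ S, Amax v w ∈ Aop v w ∧ ∀ z ∈ Aop v w, z ≤ Amax v w)
    (hmonoMin : ∀ v ∈ S, ∀ v' ∈ S, ∀ w ∈ S, ∀ w' ∈ S,
      (v ≤ v' → Amin v w ≤ Amin v' w) ∧ (w ≤ w' → Amin v w' ≤ Amin v w))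
    (hmonoMax : ∀ v ∈ S, ∀ v' ∈ S, ∀ w ∈ S, ∀ w' ∈ S,
      (v ≤ v' → Amax v w ≤ Amax v' w) ∧ (w ≤ w' → Amax v w' ≤ Amax v w))
    (hmmcpMin : ∀ vs ws : ℕ → X, (∀ j, vs j ∈ S) → (∀ j, ws j ∈ S) →
      ((Monotone vs ∧ Antitone ws) ∨ (Antitone vs ∧ Monotone ws)) →
      ∃ z : X, Tendsto (fun j => Amin (vs j) (ws j)) atTop (𝓝 z))
    (hmmcpMax : ∀ vs ws : ℕ → X, (∀ j, vs j ∈ S) → (∀ j, ws j ∈ S) →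
      ((Monotone vs ∧ Antitone ws) ∨ (Antitone vs ∧ Monotone ws)) →
      ∃ z : X, Tendsto (fun j => Amax (vs j) (ws j)) atTop (𝓝 z)) :
    ∃ vmin ∈ S, ∃ wmax ∈ S,
      -- coupled fixed points
      vmin ∈ Aop vmin wmax ∧ wmax ∈ Aop wmax vmin ∧
      -- extremality among coupled fixed points
      (∀ v ∈ S, ∀ w ∈ S, v ∈ Aop v w → w ∈ Aop w v → vmin ≤ v ∧ w ≤ wmax) ∧
      -- characterization: (vmin, wmax) is the ⪯-minimum of the coupled quasi-fixed-point set
      (Amin vmin wmax ≤ vmin ∧ wmax ≤ Amax wmax vmin) ∧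
      (∀ v ∈ S, ∀ w ∈ S, Amin v w ≤ v → w ≤ Amax w v → vmin ≤ v ∧ w ≤ wmax) := by
  classical
  -- basic facts about S
  have hmemS : ∀ y, y ∈ S ↔ y ∈ Y ∧ α ≤ y ∧ y ≤ β := by
    intro y; rw [hS]; exact Iff.rfl
  obtain ⟨y0, hy0⟩ := hSne
  have hy0' := (hmemS y0).1 hy0
  have hαβ : α ≤ β := le_trans hy0'.2.1 hy0'.2.2
  have hαS : α ∈ S := (hmemS α).2 ⟨hαβY.1, le_refl _, hαβ⟩
  have hβS : β ∈ S := (hmemS β).2 ⟨hαβY.2, hαβ, le_refl _⟩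
  have hbound : ∀ y ∈ S, α ≤ y ∧ y ≤ β := fun y hy => ((hmemS y).1 hy).2
  -- image of Amin / Amax in S
  have hTS : ∀ v ∈ S, ∀ w ∈ S, Amin v w ∈ S ∧ Amax v w ∈ S := fun v hv w hw =>
    ⟨(hAop v hv w hw).2 ((hmin v hv w hw).1), (hAop v hv w hw).2 ((hmax v hv w hw).1)⟩
  -- full mixed monotonicity helpers
  have hMinLe : ∀ {v v' w w' : X}, v ∈ S → v' ∈ S → w ∈ S → w' ∈ S →
      v ≤ v' → w' ≤ w → Amin v w ≤ Amin v' w' := by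
    intro v v' w w' hv hv' hw hw' h1 h2
    exact le_trans ((hmonoMin v hv v' hv' w hw w hw).1 h1)
      ((hmonoMin v' hv' v' hv' w' hw' w hw).2 h2)
  have hMaxLe : ∀ {v v' w w' : X}, v ∈ S → v' ∈ S → w ∈ S → w' ∈ S →
      v ≤ v' → w' ≤ w → Amax v w ≤ Amax v' w' := by
    intro v v' w w' hv hv' hw hw' h1 h2
    exact le_trans ((hmonoMax v hv v' hv' w hw w hw).1 h1)
      ((hmonoMax v' hv' v' hv' w' hw' w hw).2 h2)
  set D : Set (X × X) := Dse S Amin Amax with hD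
  set E : Set (X × X) := Ese S Amin Amax with hE
  have hmemE : ∀ p : X × X, p ∈ E ↔ (p.1 ∈ S ∧ p.2 ∈ S ∧ p.1 ≤ Amin p.1 p.2 ∧
      Amax p.2 p.1 ≤ p.2 ∧ ∀ q ∈ D, p.1 ≤ q.1 ∧ q.2 ≤ p.2) := fun p => Iff.rfl
  have hmemD : ∀ p : X × X, p ∈ D ↔ (p.1 ∈ S ∧ p.2 ∈ S ∧ Amin p.1 p.2 ≤ p.1 ∧
      p.2 ≤ Amax p.2 p.1) := fun p => Iff.rfl
  set T : X × X → X × X := fun p => (Amin p.1 p.2, Amax p.2 p.1) with hT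
  -- (α, β) ∈ E
  have hαβE : (α, β) ∈ E := by
    refine ⟨hαS, hβS, ?_, ?_, ?_⟩
    · exact (hbound _ (hTS α hαS β hβS).1).1
    · exact (hbound _ (hTS β hβS α hαS).2).2
    · intro q hq
      exact ⟨(hbound _ hq.1).1, (hbound _ hq.2.1).2⟩
  -- T maps E to E, inflationary
  have hTE : ∀ p ∈ E, T p ∈ E ∧ Rr p (T p) := by
    intro p hp
    obtain ⟨h1, h2, h3, h4, h5⟩ := hp
    have hm1 : Amin p.1 p.2 ∈ S := (hTS p.1 h1 p.2 h2).1
    have hm2 : Amax p.2 p.1 ∈ S := (hTS p.2 h2 p.1 h1).2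
    refine ⟨⟨hm1, hm2, ?_, ?_, ?_⟩, ⟨h3, h4⟩⟩
    · exact hMinLe h1 hm1 h2 hm2 h3 h4
    · exact hMaxLe hm2 h2 hm1 h1 h4 h3
    · intro q hq
      constructor
      · exact le_trans (hMinLe h1 hq.1 h2 hq.2.1 (h5 q hq).1 (h5 q hq).2) hq.2.2.1
      · exact le_trans hq.2.2.2 (hMaxLe hq.2.1 h2 hq.1 h1 (h5 q hq).2 (h5 q hq).1)
  -- limit of an Rr-increasing sequence in E
  have hseq : ∀ e : ℕ → X × X, (∀ n, e n ∈ E) → (∀ n, Rr (e n) (e (n + 1))) →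
      ∃ ℓ ∈ E, (∀ n, Rr (e n) ℓ) ∧
        Tendsto (fun n => Amin (e n).1 (e n).2) atTop (𝓝 ℓ.1) ∧
        Tendsto (fun n => Amax (e n).2 (e n).1) atTop (𝓝 ℓ.2) := by
    intro e he hstep
    set vs : ℕ → X := fun n => (e n).1 with hvs
    set ws : ℕ → X := fun n => (e n).2 with hws
    have hvsS : ∀ n, vs n ∈ S := fun n => (he n).1
    have hwsS : ∀ n, ws n ∈ S := fun n => (he n).2.1
    have hmono : Monotone vs := monotone_nat_of_le_succ fun n => (hstep n).1
    have hanti : Antitone ws := antitone_nat_of_succ_le fun n => (hstep n).2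
    obtain ⟨z, hz⟩ := hmmcpMin vs ws hvsS hwsS (Or.inl ⟨hmono, hanti⟩)
    obtain ⟨y, hy⟩ := hmmcpMax ws vs hwsS hvsS (Or.inr ⟨hanti, hmono⟩)
    have hAminS : ∀ n, Amin (vs n) (ws n) ∈ S := fun n => (hTS _ (hvsS n) _ (hwsS n)).1
    have hAmaxS : ∀ n, Amax (ws n) (vs n) ∈ S := fun n => (hTS _ (hwsS n) _ (hvsS n)).2
    have hzS : z ∈ S := hSclosed.mem_of_tendsto hz (Eventually.of_forall hAminS)
    have hyS : y ∈ S := hSclosed.mem_of_tendsto hy (Eventually.of_forall hAmaxS)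
    have hvz : ∀ n, vs n ≤ z := by
      intro n
      refine (hclosed (vs n)).1.mem_of_tendsto hz ?_
      refine eventually_atTop.2 ⟨n, fun m hm => ?_⟩
      exact le_trans (hmono hm) (he m).2.2.1
    have hyw : ∀ n, y ≤ ws n := by
      intro n
      refine (hclosed (ws n)).2.mem_of_tendsto hy ?_
      refine eventually_atTop.2 ⟨n, fun m hm => ?_⟩
      exact le_trans (he m).2.2.2.1 (hanti hm)
    have hℓE : (z, y) ∈ E := by
      refine ⟨hzS, hyS, ?_, ?_, ?_⟩
      · refine (hclosed (Amin z y)).2.mem_of_tendsto hz (Eventually.of_forall fun n => ?_)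
        exact hMinLe (hvsS n) hzS (hwsS n) hyS (hvz n) (hyw n)
      · refine (hclosed (Amax y z)).1.mem_of_tendsto hy (Eventually.of_forall fun n => ?_)
        exact hMaxLe hyS (hwsS n) hzS (hvsS n) (hyw n) (hvz n)
      · intro q hq
        constructor
        · refine (hclosed q.1).2.mem_of_tendsto hz (Eventually.of_forall fun n => ?_)
          exact le_trans (hMinLe (hvsS n) hq.1 (hwsS n) hq.2.1
            ((he n).2.2.2.2 q hq).1 ((he n).2.2.2.2 q hq).2) hq.2.2.1
        · refine (hclosed q.2).1.mem_of_tendsto hy (Eventually.of_forall fun n => ?_)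
          exact le_trans hq.2.2.2 (hMaxLe hq.2.1 (hwsS n) hq.1 (hvsS n)
            ((he n).2.2.2.2 q hq).2 ((he n).2.2.2.2 q hq).1)
    exact ⟨(z, y), hℓE, fun n => ⟨hvz n, hyw n⟩, hz, hy⟩
  -- every Rr-chain in E has an Rr-upper bound in E
  have hchain : ∀ c, c ⊆ E → IsChain Rr c → ∃ ub ∈ E, ∀ p ∈ c, Rr p ub := by
    intro c hcE hc
    by_cases H : ∃ e : ℕ → X × X, (∀ n, e n ∈ c) ∧ (∀ n, Rr (e n) (e (n+1))) ∧
        ∀ p ∈ c, ∃ n, Rr p (e n)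
    · obtain ⟨e, h1, h2, h3⟩ := H
      obtain ⟨ℓ, hℓE, hub, -, -⟩ := hseq e (fun n => hcE (h1 n)) h2
      exact ⟨ℓ, hℓE, fun p hp => (h3 p hp).elim fun n hn => Rr_trans hn (hub n)⟩
    · rcases c.eq_empty_or_nonempty with hce | ⟨c₀, hc₀⟩
      · exact ⟨(α, β), hαβE, by simp [hce]⟩
      have claim : ∀ n : ℕ, ∃ p ∈ c, ∀ q ∈ c, Rr p q → ∀ r ∈ c, Rr p r →
          dist (Amin q.1 q.2) (Amin r.1 r.2) ≤ 1/(n+1) ∧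
          dist (Amax q.2 q.1) (Amax r.2 r.1) ≤ 1/(n+1) := by
        by_contra hcl
        push_neg at hcl
        obtain ⟨n, hn⟩ := hcl
        have hpos : (0:ℝ) < 1/(n+1) := by positivity
        have hsk : ∀ p : X × X, ∃ q r : X × X, p ∈ c → q ∈ c ∧ r ∈ c ∧ Rr p q ∧ Rr q r ∧
            (1/(n+1:ℝ) < dist (Amin q.1 q.2) (Amin r.1 r.2) ∨
             1/(n+1:ℝ) < dist (Amax q.2 q.1) (Amax r.2 r.1)) := by
          intro p
          by_cases hp : p ∈ c
          · obtain ⟨q, hq, hpq, r, hr, hpr, hbad⟩ := hn p hp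
            have hbad' : 1/(n+1:ℝ) < dist (Amin q.1 q.2) (Amin r.1 r.2) ∨
                1/(n+1:ℝ) < dist (Amax q.2 q.1) (Amax r.2 r.1) := by
              by_cases hd : dist (Amin q.1 q.2) (Amin r.1 r.2) ≤ 1/(n+1)
              · exact Or.inr (hbad hd)
              · exact Or.inl (lt_of_not_ge hd)
            have hne : q ≠ r := by
              rintro rfl
              rcases hbad' with h | h <;> rw [dist_self] at h <;> linarith
            rcases hc hq hr hne with hqr | hrq
            · exact ⟨q, r, fun _ => ⟨hq, hr, hpq, hqr, hbad'⟩⟩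
            · refine ⟨r, q, fun _ => ⟨hr, hq, hpr, hrq, ?_⟩⟩
              rcases hbad' with h | h
              · exact Or.inl (by rwa [dist_comm])
              · exact Or.inr (by rwa [dist_comm])
          · exact ⟨p, p, fun h => absurd h hp⟩
        choose Fq Fr hF using hsk
        set g : ℕ → X × X :=
          fun k => Nat.rec (motive := fun _ => X × X) c₀ (fun _ prev => Fr prev) k with hgdef
        have hgs : ∀ k, g (k+1) = Fr (g k) := fun k => rfl
        have hgc : ∀ k, g k ∈ c := by
          intro k
          induction k with
          | zero => exact hc₀
          | succ k ih => rw [hgs]; exact (hF (g k) ih).2.1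
        set u : ℕ → X × X := fun k => if k % 2 = 0 then Fq (g (k/2)) else Fr (g (k/2))
          with hudef
        have hu_even : ∀ k, u (2*k) = Fq (g k) := by
          intro k
          have h1 : (2*k) % 2 = 0 := by omega
          have h2 : (2*k)/2 = k := by omega
          simp only [hudef, h1, h2, if_pos]
        have hu_odd : ∀ k, u (2*k+1) = Fr (g k) := by
          intro k
          have h1 : ¬((2*k+1) % 2 = 0) := by omega
          have h2 : (2*k+1)/2 = k := by omega
          simp only [hudef, h2, if_neg h1]
        have huc : ∀ k, u k ∈ c := by
          intro k
          by_cases h : k % 2 = 0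
          · simp only [hudef, if_pos h]; exact (hF (g (k/2)) (hgc _)).1
          · simp only [hudef, if_neg h]; exact (hF (g (k/2)) (hgc _)).2.1
        have hustep : ∀ k, Rr (u k) (u (k+1)) := by
          intro k
          by_cases h : k % 2 = 0
          · have h2 : ¬((k+1) % 2 = 0) := by omega
            have h3 : (k+1)/2 = k/2 := by omega
            simp only [hudef, if_pos h, if_neg h2, h3]
            exact (hF (g (k/2)) (hgc _)).2.2.2.1
          · have h2 : (k+1) % 2 = 0 := by omega
            have h3 : (k+1)/2 = k/2 + 1 := by omega
            simp only [hudef, if_neg h, if_pos h2, h3]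
            rw [hgs]
            exact (hF (Fr (g (k/2))) ((hF (g (k/2)) (hgc (k/2))).2.1)).2.2.1
        obtain ⟨ℓ, hℓE, hub, hzmin, hzmax⟩ := hseq u (fun k => hcE (huc k)) hustep
        have h2k : Tendsto (fun k : ℕ => 2*k) atTop atTop :=
          tendsto_atTop_atTop.2 fun b => ⟨b, fun a ha => by omega⟩
        have h2k1 : Tendsto (fun k : ℕ => 2*k+1) atTop atTop :=
          tendsto_atTop_atTop.2 fun b => ⟨b, fun a ha => by omega⟩
        have hdmin : Tendsto (fun k => dist (Amin (u (2*k)).1 (u (2*k)).2)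
            (Amin (u (2*k+1)).1 (u (2*k+1)).2)) atTop (𝓝 0) := by
          have t1 := hzmin.comp h2k
          have t2 := hzmin.comp h2k1
          have := t1.dist t2
          rw [dist_self] at this
          exact this
        have hdmax : Tendsto (fun k => dist (Amax (u (2*k)).2 (u (2*k)).1)
            (Amax (u (2*k+1)).2 (u (2*k+1)).1)) atTop (𝓝 0) := by
          have t1 := hzmax.comp h2k
          have t2 := hzmax.comp h2k1
          have := t1.dist t2
          rw [dist_self] at this
          exact this
        obtain ⟨k, hk1, hk2⟩ :=
          ((hdmin.eventually_lt_const hpos).and (hdmax.eventually_lt_const hpos)).exists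
        rw [hu_even, hu_odd] at hk1 hk2
        rcases (hF (g k) (hgc k)).2.2.2.2 with h | h
        · linarith
        · linarith
      choose p hpC hpT using claim
      set d : ℕ → X × X := fun k => Nat.rec (motive := fun _ => X × X) (p 0)
        (fun m prev => if Rr (p (m+1)) prev then prev else p (m+1)) k with hddef
      have hds : ∀ k, d (k+1) = if Rr (p (k+1)) (d k) then d k else p (k+1) := fun k => rfl
      have hdc : ∀ k, d k ∈ c := by
        intro k
        induction k with
        | zero => exact hpC 0
        | succ k ih =>
          rw [hds]
          split
          · exact ih
          · exact hpC (k+1)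
      have hpd : ∀ k, Rr (p k) (d k) := by
        intro k
        cases k with
        | zero => exact Rr_refl _
        | succ k =>
          rw [hds]
          split
          · assumption
          · exact Rr_refl _
      have hdstep : ∀ k, Rr (d k) (d (k+1)) := by
        intro k
        rw [hds]
        split
        · exact Rr_refl _
        · rename_i h
          rcases eq_or_ne (d k) (p (k+1)) with he | hne
          · exact he ▸ Rr_refl _
          · rcases hc (hdc k) (hpC (k+1)) hne with h1 | h2
            · exact h1
            · exact absurd h2 h
      obtain ⟨cs, hcsC, hcs⟩ : ∃ q ∈ c, ∀ k, ¬ Rr q (d k) := by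
        by_contra hcon
        push_neg at hcon
        exact H ⟨d, hdc, hdstep, hcon⟩
      have hdcs : ∀ k, Rr (d k) cs := by
        intro k
        rcases eq_or_ne (d k) cs with he | hne
        · exact he ▸ Rr_refl _
        · rcases hc (hdc k) hcsC hne with h1 | h2
          · exact h1
          · exact absurd h2 (hcs k)
      have hpcs : ∀ k, Rr (p k) cs := fun k => Rr_trans (hpd k) (hdcs k)
      refine ⟨T cs, (hTE cs (hcE hcsC)).1, ?_⟩
      intro x hx
      rcases eq_or_ne x cs with rfl | hne
      · exact (hTE x (hcE hx)).2
      rcases hc hx hcsC hne with hxcs | hcsx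
      · exact Rr_trans hxcs (hTE cs (hcE hcsC)).2
      · have hdists : ∀ k : ℕ, dist (Amin x.1 x.2) (Amin cs.1 cs.2) ≤ 1/(k+1) ∧
            dist (Amax x.2 x.1) (Amax cs.2 cs.1) ≤ 1/(k+1) :=
          fun k => hpT k x hx (Rr_trans (hpcs k) hcsx) cs hcsC (hpcs k)
        have e1 : Amin x.1 x.2 = Amin cs.1 cs.2 := by
          have h0 : dist (Amin x.1 x.2) (Amin cs.1 cs.2) ≤ 0 :=
            ge_of_tendsto' tendsto_one_div_add_atTop_nhds_zero_nat (fun k => (hdists k).1)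
          exact dist_le_zero.1 h0
        have e2 : Amax x.2 x.1 = Amax cs.2 cs.1 := by
          have h0 : dist (Amax x.2 x.1) (Amax cs.2 cs.1) ≤ 0 :=
            ge_of_tendsto' tendsto_one_div_add_atTop_nhds_zero_nat (fun k => (hdists k).2)
          exact dist_le_zero.1 h0
        have hx' := (hTE x (hcE hx)).2
        constructor
        · show x.1 ≤ Amin cs.1 cs.2
          rw [← e1]; exact hx'.1
        · show Amax cs.2 cs.1 ≤ x.2
          rw [← e2]; exact hx'.2
  -- Zorn's lemma
  have hzorn : ∃ m : {p : X × X // p ∈ E}, ∀ a : {p : X × X // p ∈ E},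
      Rr m.1 a.1 → Rr a.1 m.1 := by
    apply exists_maximal_of_chains_bounded (r := fun a b : {p : X × X // p ∈ E} => Rr a.1 b.1)
    · intro ch hch
      have h1 : Subtype.val '' ch ⊆ E := by rintro _ ⟨a, ha, rfl⟩; exact a.2
      have h2 : IsChain Rr (Subtype.val '' ch) := by
        rintro _ ⟨a, ha, rfl⟩ _ ⟨b, hb, rfl⟩ hne
        exact hch ha hb (fun h => hne (by rw [h]))
      obtain ⟨ub, hubE, hub⟩ := hchain _ h1 h2
      exact ⟨⟨ub, hubE⟩, fun a ha => hub a.1 ⟨a, ha, rfl⟩⟩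
    · exact fun h1 h2 => Rr_trans h1 h2
  obtain ⟨m, hm⟩ := hzorn
  have hmE := m.2
  have hTm := hTE m.1 hmE
  have hback := hm ⟨T m.1, hTm.1⟩ hTm.2
  have hv : Amin m.1.1 m.1.2 = m.1.1 := le_antisymm hback.1 hTm.2.1
  have hw : Amax m.1.2 m.1.1 = m.1.2 := le_antisymm hTm.2.2 hback.2
  obtain ⟨hm1S, hm2S, -, -, hdom⟩ := hmE
  refine ⟨m.1.1, hm1S, m.1.2, hm2S, ?_, ?_, ?_, ⟨hv.le, hw.ge⟩, ?_⟩
  · have := (hmin m.1.1 hm1S m.1.2 hm2S).1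
    rwa [hv] at this
  · have := (hmax m.1.2 hm2S m.1.1 hm1S).1
    rwa [hw] at this
  · intro v hvS w hwS hvf hwf
    exact hdom (v, w) ⟨hvS, hwS, (hmin v hvS w hwS).2 v hvf, (hmax w hwS v hvS).2 w hwf⟩
  · intro v hvS w hwS h1 h2
    exact hdom (v, w) ⟨hvS, hwS, h1, h2⟩
end
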